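/- For every real δ with 0 < δ < 1 and every prime power q ≥ 2 such that h := ⌊q^δ⌋ ≥ 1, setting n = q^h and d = q², there exist finite sets A, B of vectors in (Fin d → Bool) with |A| = |B| = n and a set E ⊆ A × B with |E| ≥ n^{2−δ}/2 such that: every pair (a, b) ∈ E has Hamming distance exactly 2(q − h); every pair (a, b) ∈ (A × B) \ E has Hamming distance strictly greater than 2(q − h); and any two distinct vectors both in A or both in B have Hamming distance strictly greater than 2(q − h). -/

import Mathlib

open Polynomial Finset

namespace Stmt8Aux

set_option linter.unusedSectionVars false

variable {F : Type*} [Field F] [Fintype F] [DecidableEq F]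

noncomputable def vec {d : ℕ} (e : Fin d ≃ F × F) (f : F → F) : Fin d → Bool :=
  fun i => decide ((e i).2 = f (e i).1)

lemma vec_injective {d : ℕ} (e : Fin d ≃ F × F) :
    Function.Injective (vec (F := F) e) := by
  intro f g hfg
  funext x
  have h1 := congrFun hfg (e.symm (x, f x))
  simp only [vec, Equiv.apply_symm_apply, decide_eq_decide, eq_self_iff_true, true_iff] at h1
  exact h1

lemma hammingDist_vec {d : ℕ} (e : Fin d ≃ F × F) (f g : F → F) :
    hammingDist (vec e f) (vec e g)
      = 2 * (univ.filter fun x => f x ≠ g x).card := by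
  classical
  have step1 : hammingDist (vec e f) (vec e g)
      = (univ.filter fun z : F × F =>
          (decide (z.2 = f z.1)) ≠ (decide (z.2 = g z.1))).card := by
    unfold hammingDist
    apply Finset.card_equiv e
    intro i
    simp [vec]
  have hset : (univ.filter fun z : F × F =>
        (decide (z.2 = f z.1)) ≠ (decide (z.2 = g z.1)))
      = (univ.filter fun x => f x ≠ g x).biUnion
          (fun x => ({(x, f x), (x, g x)} : Finset (F × F))) := by
    ext ⟨x, y⟩
    simp only [mem_filter, mem_univ, true_and, mem_biUnion, mem_insert, mem_singleton,
      ne_eq, decide_eq_decide, Prod.mk.injEq]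
    constructor
    · intro hne
      refine ⟨x, ?_, ?_⟩
      · intro hfg; exact hne (by rw [hfg])
      · by_cases h1 : y = f x
        · exact Or.inl ⟨rfl, h1⟩
        · right
          refine ⟨rfl, ?_⟩
          by_contra h2
          exact hne ⟨fun hy => (h1 hy).elim, fun hy => (h2 hy).elim⟩
    · rintro ⟨a, ha, ⟨rfl, rfl⟩ | ⟨rfl, rfl⟩⟩
      · intro hiff; exact ha (hiff.mp rfl)
      · intro hiff; exact ha (hiff.mpr rfl).symm
  rw [step1, hset, Finset.card_biUnion]
  · rw [Finset.sum_congr rfl (g := fun _ => 2) (fun x hx => ?_), Finset.sum_const,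
      smul_eq_mul, mul_comm]
    simp only [mem_filter, mem_univ, true_and] at hx
    exact Finset.card_pair (fun hp => hx (congrArg Prod.snd hp))
  · intro x _ y _ hxy
    simp only [Finset.disjoint_left, mem_insert, mem_singleton]
    rintro ⟨a, b⟩ (h1 | h1) (h2 | h2) <;>
      exact hxy ((congrArg Prod.fst h1).symm.trans (congrArg Prod.fst h2))

lemma hammingDist_vec' {d : ℕ} (e : Fin d ≃ F × F) (f g : F → F) :
    hammingDist (vec e f) (vec e g)
      = 2 * (Fintype.card F - (univ.filter fun x => f x = g x).card) := by
  rw [hammingDist_vec]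
  congr 1
  have h2 : (univ.filter fun x => f x = g x).card
      + (univ.filter fun x => ¬ (f x = g x)).card = Fintype.card F := by
    rw [Finset.card_filter_add_card_filter_not, card_univ]
  simp only [ne_eq]
  omega

noncomputable def plow (h : ℕ) (c : Fin h → F) : F[X] :=
  ∑ i : Fin h, C (c i) * X ^ (i : ℕ)

lemma plow_coeff {h : ℕ} (c : Fin h → F) (j : ℕ) :
    (plow h c).coeff j = if hj : j < h then c ⟨j, hj⟩ else 0 := by
  rw [plow, finset_sum_coeff]
  simp only [coeff_C_mul, coeff_X_pow, mul_ite, mul_one, mul_zero]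
  split
  · next hj =>
    rw [Finset.sum_eq_single (⟨j, hj⟩ : Fin h)]
    · simp
    · intro b _ hb
      rw [if_neg]
      intro hbj
      exact hb (Fin.ext hbj.symm)
    · simp
  · next hj =>
    apply Finset.sum_eq_zero
    intro i _
    rw [if_neg]
    intro hij
    exact hj (hij ▸ i.isLt)

lemma plow_sub {h : ℕ} (c c' : Fin h → F) : plow h (c - c') = plow h c - plow h c' := by
  simp only [plow, Pi.sub_apply, map_sub, sub_mul, Finset.sum_sub_distrib]

lemma plow_natDegree_lt {h : ℕ} (hh : 0 < h) (c : Fin h → F) :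
    (plow h c).natDegree < h := by
  have hle : (plow h c).natDegree ≤ h - 1 := by
    apply natDegree_sum_le_of_forall_le
    intro i _
    refine le_trans (natDegree_C_mul_le _ _) ?_
    rw [natDegree_X_pow]
    omega
  omega

lemma plow_degree_lt {h : ℕ} (c : Fin h → F) :
    (plow h c).degree < (h : ℕ) := by
  rw [degree_lt_iff_coeff_zero]
  intro m hm
  rw [plow_coeff, dif_neg]
  exact_mod_cast fun hc => absurd hm (by exact_mod_cast Nat.not_le.mpr hc)

noncomputable def mS (S : Finset F) : F[X] := ∏ s ∈ S, (X - C s)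

lemma mS_monic (S : Finset F) : (mS S).Monic :=
  monic_prod_of_monic _ _ fun s _ => monic_X_sub_C s

lemma mS_natDegree (S : Finset F) : (mS S).natDegree = S.card := by
  rw [mS, natDegree_prod]
  · simp
  · intro s _
    exact X_sub_C_ne_zero s

lemma eval_mS (S : Finset F) (x : F) : eval x (mS S) = 0 ↔ x ∈ S := by
  simp only [mS, eval_prod, Finset.prod_eq_zero_iff, sub_eq_zero, eval_sub, eval_X, eval_C]
  constructor
  · rintro ⟨s, hs, rfl⟩; exact hs
  · intro hx; exact ⟨x, hx, rfl⟩

lemma mS_eq {h : ℕ} (S : Finset F) (hS : S.card = h) :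
    mS S = X ^ h + plow h (fun i : Fin h => (mS S).coeff i) := by
  ext j
  rw [coeff_add, coeff_X_pow, plow_coeff]
  by_cases hj : j < h
  · rw [dif_pos hj, if_neg (by omega), zero_add]
  · by_cases hj2 : j = h
    · subst hj2
      rw [dif_neg hj, if_pos rfl, add_zero]
      have := (mS_monic S).coeff_natDegree
      rwa [mS_natDegree, hS] at this
    · rw [if_neg (fun hc => hj2 hc), dif_neg hj, add_zero]
      exact coeff_eq_zero_of_natDegree_lt (by rw [mS_natDegree, hS]; omega)

lemma monic_eq_mS {P : F[X]} (hm : P.Monic) (R : Finset F)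
    (hdeg : P.natDegree = R.card) (hroots : ∀ x ∈ R, eval x P = 0) : P = mS R := by
  classical
  have hP0 : P ≠ 0 := hm.ne_zero
  have hle : R.val ≤ P.roots := by
    rw [Multiset.le_iff_count]
    intro a
    by_cases ha : a ∈ R
    · rw [Multiset.count_eq_one_of_mem R.nodup ha, count_roots]
      exact (rootMultiplicity_pos hP0).mpr (hroots a ha)
    · rw [Multiset.count_eq_zero_of_notMem (by simpa using ha)]
      omega
  have hdvd : mS R ∣ P := by
    refine dvd_trans ?_
      (dvd_trans (Multiset.prod_dvd_prod_of_le
        (Multiset.map_le_map (f := fun a => X - C a) hle)) (prod_multiset_X_sub_C_dvd P))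
    rw [mS, Finset.prod_eq_multiset_prod]
  obtain ⟨u, hu⟩ := hdvd
  have humonic : u.Monic := (mS_monic R).of_mul_monic_left (hu ▸ hm)
  have hdeg2 : u.natDegree = 0 := by
    have hnd := natDegree_mul (mS_monic R).ne_zero humonic.ne_zero
    rw [← hu, hdeg, mS_natDegree] at hnd
    omega
  rw [humonic.natDegree_eq_zero.mp hdeg2, mul_one] at hu
  exact hu

lemma card_roots_filter_le {P : F[X]} (hP : P ≠ 0) :
    (univ.filter fun x => eval x P = 0).card ≤ P.natDegree := by
  classical
  calc (univ.filter fun x => eval x P = 0).card ≤ P.roots.toFinset.card := by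
        apply Finset.card_le_card
        intro x hx
        simp only [mem_filter, mem_univ, true_and] at hx
        simp [Multiset.mem_toFinset, mem_roots hP, IsRoot, hx]
    _ ≤ Multiset.card P.roots := P.roots.toFinset_card_le
    _ ≤ P.natDegree := P.card_roots'

lemma cast_descFactorial (n k : ℕ) (hk : k ≤ n) :
    ((n.descFactorial k : ℕ) : ℝ) = ∏ i ∈ Finset.range k, ((n : ℝ) - i) := by
  rw [Nat.descFactorial_eq_prod_range, Nat.cast_prod]
  exact Finset.prod_congr rfl fun i hi =>
    Nat.cast_sub (le_trans (Nat.le_of_lt (Finset.mem_range.mp hi)) hk)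

lemma pow_div_le_choose (n k : ℕ) (hk : k ≤ n) :
    ((n : ℝ) / k) ^ k ≤ (n.choose k : ℝ) := by
  rcases Nat.eq_zero_or_pos k with rfl | hk0
  · simp
  have hkR : (0 : ℝ) < k := by exact_mod_cast hk0
  have key : ∏ i ∈ range k, ((n : ℝ) / k * ((k : ℝ) - i)) ≤ ∏ i ∈ range k, ((n : ℝ) - i) := by
    apply Finset.prod_le_prod
    · intro i hi
      have hik : (i : ℝ) < k := by exact_mod_cast Finset.mem_range.mp hi
      have : (0:ℝ) ≤ (n : ℝ) / k := div_nonneg (Nat.cast_nonneg n) hkR.le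
      nlinarith
    · intro i hi
      have hik : (i : ℝ) < k := by exact_mod_cast Finset.mem_range.mp hi
      have hkn : (k : ℝ) ≤ n := by exact_mod_cast hk
      rw [div_mul_eq_mul_div, div_le_iff₀ hkR]
      have hi0 : (0:ℝ) ≤ i := Nat.cast_nonneg i
      nlinarith
  rw [Finset.prod_mul_distrib, Finset.prod_const, Finset.card_range] at key
  have hfact : ∏ i ∈ range k, ((k : ℝ) - i) = ((Nat.factorial k) : ℝ) := by
    rw [← cast_descFactorial k k le_rfl, Nat.descFactorial_self]
  rw [hfact, ← cast_descFactorial n k hk, Nat.descFactorial_eq_factorial_mul_choose,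
    Nat.cast_mul] at key
  have hfk : (0 : ℝ) < ((Nat.factorial k) : ℝ) := by exact_mod_cast Nat.factorial_pos k
  calc ((n : ℝ) / k) ^ k = ((n : ℝ) / k) ^ k * ((Nat.factorial k) : ℝ) / ((Nat.factorial k) : ℝ) := by field_simp
    _ ≤ ((Nat.factorial k) : ℝ) * (n.choose k : ℝ) / ((Nat.factorial k) : ℝ) := by
        exact (div_le_div_iff_of_pos_right hfk).mpr key
    _ = (n.choose k : ℝ) := by field_simp

end Stmt8Aux



/-- the Reed–Solomon-based instantiation of a dense bipartite graph with
low contact dimension: for `0 < δ < 1` and a prime power `q ≥ 2` with `h = ⌊q^δ⌋ ≥ 1`,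
taking `n = q^h` and `d = q²`, there are sets `A, B ⊆ {0,1}^d` of size `n` and
`E ⊆ A × B` with `|E| ≥ n^{2-δ}/2` such that edges are at Hamming distance exactly
`2(q - h)` and all other distinct pairs are at distance strictly greater. -/
theorem stmt_8 (δ : ℝ) (hδ0 : 0 < δ) (hδ1 : δ < 1)
    (q : ℕ) (hq : IsPrimePow q) (hq2 : 2 ≤ q)
    (h : ℕ) (hdef : h = ⌊(q : ℝ) ^ δ⌋₊) (h1 : 1 ≤ h) :
    ∃ (A B : Finset (Fin (q ^ 2) → Bool))
      (E : Finset ((Fin (q ^ 2) → Bool) × (Fin (q ^ 2) → Bool))),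
      A.card = q ^ h ∧ B.card = q ^ h ∧
      E ⊆ A ×ˢ B ∧
      ((q ^ h : ℝ) ^ (2 - δ)) / 2 ≤ (E.card : ℝ) ∧
      (∀ ab ∈ E, hammingDist ab.1 ab.2 = 2 * (q - h)) ∧
      (∀ a ∈ A, ∀ b ∈ B, (a, b) ∉ E → 2 * (q - h) < hammingDist a b) ∧
      (∀ a ∈ A, ∀ a' ∈ A, a ≠ a' → 2 * (q - h) < hammingDist a a') ∧
      (∀ b ∈ B, ∀ b' ∈ B, b ≠ b' → 2 * (q - h) < hammingDist b b') := by
  classical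
  open Polynomial Finset Stmt8Aux in
  obtain ⟨p, k, hpp, hk0, hpk⟩ := hq
  have hp : p.Prime := Nat.prime_iff.mpr hpp
  haveI : Fact p.Prime := ⟨hp⟩
  set F := GaloisField p k with hFdef
  haveI : Fintype F := Fintype.ofFinite F
  have hF : Fintype.card F = q := by
    rw [← Nat.card_eq_fintype_card, GaloisField.card p k hk0.ne', hpk]
  -- basic numeric facts
  have hqR : (1 : ℝ) < q := by exact_mod_cast hq2
  have hq0R : (0 : ℝ) < q := by linarith
  have hhle : (h : ℝ) ≤ (q : ℝ) ^ δ := by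
    rw [hdef]; exact Nat.floor_le (Real.rpow_nonneg hq0R.le δ)
  have hhq : h < q := by
    have : (q : ℝ) ^ δ < (q : ℝ) ^ (1 : ℝ) :=
      Real.rpow_lt_rpow_of_exponent_lt hqR hδ1
    rw [Real.rpow_one] at this
    exact_mod_cast lt_of_le_of_lt hhle this
  have hh0 : 0 < h := h1
  -- the coordinate equivalence
  have hcards : Fintype.card (Fin (q ^ 2)) = Fintype.card (F × F) := by
    simp [Fintype.card_prod, hF, sq]
  let e : Fin (q ^ 2) ≃ F × F := Fintype.equivOfCardEq hcards
  -- the basic functions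
  let fA : (Fin h → F) → F → F := fun c x => eval x (plow h c)
  let fB : (Fin h → F) → F → F := fun c x => x ^ h + eval x (plow h c)
  let low : Finset F → Fin h → F := fun S i => (mS S).coeff i
  let V : (F → F) → Fin (q ^ 2) → Bool := vec e
  have hVinj : Function.Injective V := vec_injective e
  -- plow is injective on coefficients
  have hplow_coeffs : ∀ c c' : Fin h → F, plow h c = plow h c' → c = c' := by
    intro c c' hcc
    funext i
    have := congrArg (fun P => Polynomial.coeff P (i : ℕ)) hcc
    simpa only [plow_coeff, dif_pos i.isLt, Fin.eta] using this
  have hpoly_inj : ∀ c c' : Fin h → F,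
      (∀ x, eval x (plow h c) = eval x (plow h c')) → c = c' := by
    intro c c' hcc
    apply hplow_coeffs
    have hz : plow h c - plow h c' = 0 := by
      apply Polynomial.eq_zero_of_natDegree_lt_card_of_eval_eq_zero _
        (f := (id : F → F)) Function.injective_id
      · intro x
        simp [eval_sub, hcc x]
      · rw [hF]
        calc (plow h c - plow h c').natDegree
            ≤ max (plow h c).natDegree (plow h c').natDegree := natDegree_sub_le _ _
          _ < h := max_lt (plow_natDegree_lt hh0 c) (plow_natDegree_lt hh0 c')
          _ < q := hhq
    exact sub_eq_zero.mp hz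
  have hfAinj : Function.Injective fA := fun c c' hcc =>
    hpoly_inj c c' fun x => congrFun hcc x
  have hfBinj : Function.Injective fB := by
    intro c c' hcc
    apply hpoly_inj
    intro x
    have := congrFun hcc x
    simpa [fB] using this
  -- the sets
  let A : Finset (Fin (q ^ 2) → Bool) := Finset.image (fun c => V (fA c)) Finset.univ
  let B : Finset (Fin (q ^ 2) → Bool) := Finset.image (fun c => V (fB c)) Finset.univ
  let P2 : Finset ((Fin h → F) × Finset F) :=
    (Finset.univ : Finset (Fin h → F)) ×ˢ Finset.powersetCard h (Finset.univ : Finset F)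
  let E : Finset ((Fin (q ^ 2) → Bool) × (Fin (q ^ 2) → Bool)) :=
    P2.image (fun cs => (V (fA cs.1), V (fB (cs.1 + low cs.2))))
  have hcardfun : Fintype.card (Fin h → F) = q ^ h := by
    rw [Fintype.card_fun, hF, Fintype.card_fin]
  -- distance formula
  have hdist : ∀ f g : F → F, hammingDist (V f) (V g)
      = 2 * (q - (Finset.univ.filter fun x => f x = g x).card) := by
    intro f g
    rw [show V f = vec e f from rfl, show V g = vec e g from rfl, hammingDist_vec' e f g, hF]
  -- the key polynomial D for pairs (c, c')
  have hDfacts : ∀ c c' : Fin h → F,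
      ((X ^ h + plow h (c' - c) : F[X]).Monic) ∧
      ((X ^ h + plow h (c' - c) : F[X]).natDegree = h) ∧
      (∀ x, fA c x = fB c' x ↔ eval x (X ^ h + plow h (c' - c)) = 0) := by
    intro c c'
    have hdeglt : (plow h (c' - c)).degree < (X ^ h : F[X]).degree := by
      rw [degree_X_pow]
      exact plow_degree_lt _
    refine ⟨(monic_X_pow h).add_of_left hdeglt, ?_, ?_⟩
    · have := degree_add_eq_left_of_degree_lt hdeglt
      rw [degree_X_pow] at this
      exact natDegree_eq_of_degree_eq_some this
    · intro x
      have hev : eval x (X ^ h + plow h (c' - c)) = fB c' x - fA c x := by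
        simp only [eval_add, eval_pow, eval_X, plow_sub, eval_sub, fA, fB]
        ring
      rw [hev, sub_eq_zero, eq_comm]
  -- mS S coincides with X^h + plow of its lower coefficients
  have hmS_decomp : ∀ S : Finset F, S.card = h → mS S = X ^ h + plow h (low S) :=
    fun S hS => mS_eq S hS
  -- agreement set between fA c and fB (c + low S) is S
  have hagree_edge : ∀ (c : Fin h → F) (S : Finset F), S.card = h →
      (Finset.univ.filter fun x => fA c x = fB (c + low S) x) = S := by
    intro c S hS
    ext x
    simp only [Finset.mem_filter, Finset.mem_univ, true_and]
    rw [(hDfacts c (c + low S)).2.2 x]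
    have : (c + low S) - c = low S := by ring
    rw [this, ← hmS_decomp S hS, eval_mS]
  -- cardinality of A and B
  have hcardA : A.card = q ^ h := by
    rw [Finset.card_image_of_injective _ (fun _ _ hxy => hfAinj (hVinj hxy)), Finset.card_univ, hcardfun]
  have hcardB : B.card = q ^ h := by
    rw [Finset.card_image_of_injective _ (fun _ _ hxy => hfBinj (hVinj hxy)), Finset.card_univ, hcardfun]
  -- injectivity of low on card-h sets
  have hlowinj : ∀ S S' : Finset F, S.card = h → S'.card = h → low S = low S' → S = S' := by
    intro S S' hS hS' hlow
    have hmm : mS S = mS S' := by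
      rw [hmS_decomp S hS, hmS_decomp S' hS', hlow]
    ext x
    rw [← eval_mS S x, ← eval_mS S' x, hmm]
  -- cardinality of E
  have hEcard : E.card = q ^ h * Nat.choose q h := by
    have hinj : Set.InjOn (fun cs : (Fin h → F) × Finset F =>
        (V (fA cs.1), V (fB (cs.1 + low cs.2)))) P2 := by
      rintro ⟨c, S⟩ hcs ⟨c', S'⟩ hcs' heq
      simp only [P2, Finset.coe_product, Set.mem_prod, Finset.mem_coe,
        Finset.mem_powersetCard] at hcs hcs'
      simp only [Prod.mk.injEq] at heq
      have hc : c = c' := hfAinj (hVinj heq.1)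
      subst hc
      have hsum : c + low S = c + low S' := hfBinj (hVinj heq.2)
      have hlow : low S = low S' := by
        funext i
        have := congrFun hsum i
        simpa using this
      have : S = S' := hlowinj S S' hcs.2.2 hcs'.2.2 hlow
      simp [this]
    rw [Finset.card_image_of_injOn hinj]
    simp only [P2, Finset.card_product, Finset.card_univ, hcardfun,
      Finset.card_powersetCard, Finset.card_univ, hF]
  -- membership descriptions
  have hmemA : ∀ a ∈ A, ∃ c : Fin h → F, a = V (fA c) := by
    intro a ha
    obtain ⟨c, _, rfl⟩ := Finset.mem_image.mp ha
    exact ⟨c, rfl⟩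
  have hmemB : ∀ b ∈ B, ∃ c : Fin h → F, b = V (fB c) := by
    intro b hb
    obtain ⟨c, _, rfl⟩ := Finset.mem_image.mp hb
    exact ⟨c, rfl⟩
  refine ⟨A, B, E, hcardA, hcardB, ?_, ?_, ?_, ?_, ?_, ?_⟩
  -- E ⊆ A ×ˢ B
  · intro ab hab
    obtain ⟨⟨c, S⟩, _, rfl⟩ := Finset.mem_image.mp hab
    simp only [Finset.mem_product]
    exact ⟨Finset.mem_image.mpr ⟨c, Finset.mem_univ _, rfl⟩,
      Finset.mem_image.mpr ⟨c + low S, Finset.mem_univ _, rfl⟩⟩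
  -- counting bound
  · have hchoose : (q : ℝ) ^ ((h : ℝ) * (1 - δ)) ≤ (Nat.choose q h : ℝ) := by
      have hbase : (q : ℝ) ^ (1 - δ) ≤ (q : ℝ) / h := by
        have h0h : (0 : ℝ) < h := by exact_mod_cast hh0
        have : (q : ℝ) / (q : ℝ) ^ δ ≤ (q : ℝ) / h :=
          div_le_div_of_nonneg_left hq0R.le h0h hhle
        calc (q : ℝ) ^ (1 - δ) = (q : ℝ) ^ (1 : ℝ) / (q : ℝ) ^ δ := by
              rw [← Real.rpow_sub hq0R]
          _ = (q : ℝ) / (q : ℝ) ^ δ := by rw [Real.rpow_one]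
          _ ≤ (q : ℝ) / h := this
      calc (q : ℝ) ^ ((h : ℝ) * (1 - δ)) = ((q : ℝ) ^ (1 - δ)) ^ (h : ℕ) := by
            rw [mul_comm, Real.rpow_mul hq0R.le, Real.rpow_natCast]
        _ ≤ ((q : ℝ) / h) ^ (h : ℕ) := by
            apply pow_le_pow_left₀ (Real.rpow_nonneg hq0R.le _) hbase
        _ ≤ (Nat.choose q h : ℝ) := pow_div_le_choose q h hhq.le
    have hmain : ((q : ℝ) ^ h) ^ (2 - δ) ≤ (E.card : ℝ) := by
      rw [hEcard]
      push_cast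
      have e1 : ((q : ℝ) ^ h) ^ (2 - δ)
          = (q : ℝ) ^ h * (q : ℝ) ^ ((h : ℝ) * (1 - δ)) := by
        rw [← Real.rpow_natCast (q : ℝ) h, ← Real.rpow_mul hq0R.le]
        rw [← Real.rpow_add hq0R]
        congr 1
        ring
      rw [e1]
      apply mul_le_mul_of_nonneg_left hchoose (by positivity)
    calc ((q : ℝ) ^ h) ^ (2 - δ) / 2 ≤ ((q : ℝ) ^ h) ^ (2 - δ) :=
          half_le_self (Real.rpow_nonneg (by positivity) _)
      _ ≤ (E.card : ℝ) := hmain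
  -- edges have distance exactly 2(q-h)
  · rintro ab hab
    obtain ⟨⟨c, S⟩, hcs, rfl⟩ := Finset.mem_image.mp hab
    simp only [P2, Finset.mem_product, Finset.mem_powersetCard] at hcs
    have hS : S.card = h := hcs.2.2
    show hammingDist (V (fA c)) (V (fB (c + low S))) = 2 * (q - h)
    rw [hdist, hagree_edge c S hS, hS]
  -- non-edges in A × B
  · rintro a ha b hb hnab
    obtain ⟨c, rfl⟩ := hmemA a ha
    obtain ⟨c', rfl⟩ := hmemB b hb
    obtain ⟨hmon, hndeg, heval⟩ := hDfacts c c'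
    set D : F[X] := X ^ h + plow h (c' - c) with hDdef
    set R : Finset F := Finset.univ.filter fun x => eval x D = 0 with hRdef
    have hagree : (Finset.univ.filter fun x => fA c x = fB c' x) = R := by
      apply Finset.filter_congr
      intro x _
      exact heval x
    have hRle : R.card ≤ h := by
      calc R.card ≤ D.natDegree := card_roots_filter_le hmon.ne_zero
        _ = h := hndeg
    have hRlt : R.card < h := by
      rcases lt_or_eq_of_le hRle with hlt | heq
      · exact hlt
      · exfalso
        apply hnab
        have hDmS : D = mS R := by
          apply monic_eq_mS hmon R (by rw [hndeg, heq])
          intro x hx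
          simp only [hRdef, Finset.mem_filter] at hx
          exact hx.2
        have hc' : c' = c + low R := by
          funext i
          have h1 : (c' - c) i = low R i := by
            have h2 : D.coeff (i : ℕ) = (mS R).coeff (i : ℕ) := by rw [hDmS]
            rw [hDdef] at h2
            simp only [coeff_add, coeff_X_pow, plow_coeff, dif_pos i.isLt, Fin.eta,
              if_neg (Nat.ne_of_lt (lt_of_lt_of_le i.isLt (le_refl h)) :
                (i : ℕ) ≠ h), zero_add] at h2
            exact h2
          simp only [Pi.sub_apply] at h1
          show c' i = c i + low R i
          rw [← h1]
          ring
        rw [hc']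
        apply Finset.mem_image.mpr
        refine ⟨(c, R), ?_, rfl⟩
        simp only [P2, Finset.mem_product, Finset.mem_powersetCard]
        exact ⟨Finset.mem_univ _, Finset.subset_univ _, heq⟩
    rw [hdist, hagree]
    have : R.card < q := lt_of_lt_of_le hRlt hhq.le
    omega
  -- distinct pairs within A
  · rintro a ha a' ha' hne
    obtain ⟨c, rfl⟩ := hmemA a ha
    obtain ⟨c', rfl⟩ := hmemA a' ha'
    have hcc : c ≠ c' := fun hcc => hne (by rw [hcc])
    have hP0 : plow h c - plow h c' ≠ 0 := by
      intro hz
      exact hcc (hplow_coeffs c c' (sub_eq_zero.mp hz))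
    have hagr : (Finset.univ.filter fun x => fA c x = fA c' x).card < h := by
      have hsub : (Finset.univ.filter fun x => fA c x = fA c' x)
          = (Finset.univ.filter fun x => eval x (plow h c - plow h c') = 0) := by
        apply Finset.filter_congr
        intro x _
        simp only [fA, eval_sub, sub_eq_zero]
      rw [hsub]
      calc (Finset.univ.filter fun x => eval x (plow h c - plow h c') = 0).card
          ≤ (plow h c - plow h c').natDegree := card_roots_filter_le hP0
        _ ≤ max (plow h c).natDegree (plow h c').natDegree := natDegree_sub_le _ _
        _ < h := max_lt (plow_natDegree_lt hh0 c) (plow_natDegree_lt hh0 c')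
    rw [hdist]
    have : (Finset.univ.filter fun x => fA c x = fA c' x).card < q :=
      lt_of_lt_of_le hagr hhq.le
    omega
  -- distinct pairs within B
  · rintro b hb b' hb' hne
    obtain ⟨c, rfl⟩ := hmemB b hb
    obtain ⟨c', rfl⟩ := hmemB b' hb'
    have hcc : c ≠ c' := fun hcc => hne (by rw [hcc])
    have hP0 : plow h c - plow h c' ≠ 0 := by
      intro hz
      exact hcc (hplow_coeffs c c' (sub_eq_zero.mp hz))
    have hagr : (Finset.univ.filter fun x => fB c x = fB c' x).card < h := by
      have hsub : (Finset.univ.filter fun x => fB c x = fB c' x)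
          = (Finset.univ.filter fun x => eval x (plow h c - plow h c') = 0) := by
        apply Finset.filter_congr
        intro x _
        simp only [fB, eval_sub, sub_eq_zero, add_right_inj]
      rw [hsub]
      calc (Finset.univ.filter fun x => eval x (plow h c - plow h c') = 0).card
          ≤ (plow h c - plow h c').natDegree := card_roots_filter_le hP0
        _ ≤ max (plow h c).natDegree (plow h c').natDegree := natDegree_sub_le _ _
        _ < h := max_lt (plow_natDegree_lt hh0 c) (plow_natDegree_lt hh0 c')
    rw [hdist]
    have : (Finset.univ.filter fun x => fB c x = fB c' x).card < q :=
      lt_of_lt_of_le hagr hhq.le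
    omega
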